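/- Let d = (∏_{n=1}^p (det a_n)²)^{1/(pm)}. Then Σ_{n=1}^p Tr(b_n² + 2·a_n·a_nᵀ) ≥ 2·p·m·d, with equality if and only if b_n = 0 and a_n·a_nᵀ = d·I_m for every n ∈ {1,…,p}. (By the trace identity Tr(L(τ)²) = Σ_{n=1}^p Tr(b_n² + 2·a_n·a_nᵀ) for |τ| = 1, this bounds from below the sum of squares of the eigenvalues of the Floquet matrix L(τ).) -/

import Mathlib

open Matrix

/-- AM-GM with equality case, via logarithms. -/
theorem amgm_eq_aux {ι : Type*} (s : Finset ι) (x : ι → ℝ) (d : ℝ) (hd : 0 < d)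
    (hx : ∀ i ∈ s, 0 < x i) (hprod : ∏ i ∈ s, x i = d ^ s.card) :
    (s.card : ℝ) * d ≤ ∑ i ∈ s, x i ∧
      ((∑ i ∈ s, x i = (s.card : ℝ) * d) ↔ ∀ i ∈ s, x i = d) := by
  set g : ι → ℝ := fun i => x i - d - d * Real.log (x i / d) with hg
  have hg0 : ∀ i ∈ s, 0 ≤ g i := by
    intro i hi
    have hxi := hx i hi
    have h1 : Real.log (x i / d) ≤ x i / d - 1 :=
      Real.log_le_sub_one_of_pos (div_pos hxi hd)
    have := mul_le_mul_of_nonneg_left h1 hd.le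
    simp only [hg]
    have : d * (x i / d) = x i := by field_simp
    nlinarith [mul_le_mul_of_nonneg_left h1 hd.le]
  have hlog : ∑ i ∈ s, Real.log (x i / d) = 0 := by
    rw [← Real.log_prod (fun i hi => (div_pos (hx i hi) hd).ne')]
    rw [Finset.prod_div_distrib, hprod, Finset.prod_const, div_self (by positivity)]
    exact Real.log_one
  have hsumg : ∑ i ∈ s, g i = (∑ i ∈ s, x i) - (s.card : ℝ) * d := by
    simp only [hg, Finset.sum_sub_distrib, ← Finset.mul_sum, hlog, mul_zero,
      Finset.sum_const, nsmul_eq_mul]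
    ring
  have hge : (s.card : ℝ) * d ≤ ∑ i ∈ s, x i := by
    have := Finset.sum_nonneg hg0
    linarith [hsumg ▸ this]
  refine ⟨hge, ?_, ?_⟩
  · intro heq i hi
    have hzero : ∑ j ∈ s, g j = 0 := by rw [hsumg, heq]; ring
    have := (Finset.sum_eq_zero_iff_of_nonneg hg0).mp hzero i hi
    by_contra hne
    have hxi := hx i hi
    have hdiv : x i / d ≠ 1 := by
      intro h; exact hne (by field_simp at h; linarith)
    have h1 : Real.log (x i / d) < x i / d - 1 :=
      Real.log_lt_sub_one_of_pos (div_pos hxi hd) hdiv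
    have h2 := mul_lt_mul_of_pos_left h1 hd
    have h3 : d * (x i / d) = x i := by field_simp
    simp only [hg] at this
    nlinarith
  · intro h
    rw [Finset.sum_congr rfl h, Finset.sum_const, nsmul_eq_mul]

theorem trace_sq_aux {m : ℕ} (b : Matrix (Fin m) (Fin m) ℝ) (hb : bᵀ = b) :
    0 ≤ trace (b * b) ∧ (trace (b * b) = 0 ↔ b = 0) := by
  have hsym : ∀ i j, b j i = b i j := fun i j => by
    conv_lhs => rw [← hb]
    rfl
  have htr : trace (b * b) = ∑ i, ∑ j, (b i j) ^ 2 := by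
    simp only [trace, diag, mul_apply]
    exact Finset.sum_congr rfl fun i _ => Finset.sum_congr rfl fun j _ => by
      rw [hsym i j, sq]
  constructor
  · rw [htr]; positivity
  · rw [htr]
    constructor
    · intro h
      ext i j
      have h1 := (Finset.sum_eq_zero_iff_of_nonneg
        (fun i _ => Finset.sum_nonneg (fun j _ => sq_nonneg _))).mp h i (Finset.mem_univ i)
      have h2 := (Finset.sum_eq_zero_iff_of_nonneg (fun j _ => sq_nonneg _)).mp h1 j
        (Finset.mem_univ j)
      simpa using pow_eq_zero_iff (n := 2) (by norm_num) |>.mp h2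
    · intro h; simp [h]

theorem herm_aux {m : ℕ} (a : Matrix (Fin m) (Fin m) ℝ) : (a * aᵀ).IsHermitian := by
  have := isHermitian_mul_conjTranspose_self a
  rwa [conjTranspose_eq_transpose_of_trivial] at this

theorem trace_eq_sum_eig {m : ℕ} {M : Matrix (Fin m) (Fin m) ℝ} (hM : M.IsHermitian) :
    trace M = ∑ i, hM.eigenvalues i := by
  conv_lhs => rw [hM.spectral_theorem]
  rw [Unitary.conjStarAlgAut_apply]
  rw [trace_mul_comm, ← mul_assoc]
  have hU := (Matrix.mem_unitaryGroup_iff').mp (hM.eigenvectorUnitary).2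
  rw [hU, one_mul, trace_diagonal]
  simp [RCLike.ofReal]

theorem eq_smul_one_aux {m : ℕ} {M : Matrix (Fin m) (Fin m) ℝ} (hM : M.IsHermitian) {d : ℝ}
    (h : ∀ i, hM.eigenvalues i = d) : M = d • 1 := by
  have hdiag : diagonal (RCLike.ofReal ∘ hM.eigenvalues) = d • (1 : Matrix (Fin m) (Fin m) ℝ) := by
    have he : (RCLike.ofReal ∘ hM.eigenvalues : Fin m → ℝ) = fun _ => d :=
      funext fun i => by simp [h i, RCLike.ofReal]
    rw [he, smul_one_eq_diagonal]
  conv_lhs => rw [hM.spectral_theorem]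
  rw [Unitary.conjStarAlgAut_apply]
  rw [hdiag, mul_smul_comm, smul_mul_assoc, mul_one]
  rw [(Matrix.mem_unitaryGroup_iff).mp (hM.eigenvectorUnitary).2]

/-- With `d = (∏ (det a_n)²)^{1/(pm)}`, one has
`Σ Tr (b_n² + 2 a_n a_nᵀ) ≥ 2 p m d`, with equality iff `b_n = 0` and
`a_n a_nᵀ = d I_m` for all `n`. -/
theorem trace_square_lower_bound (m p : ℕ) (hm : 1 ≤ m) (hp : 1 ≤ p)
    (a b : ℤ → Matrix (Fin m) (Fin m) ℝ)
    (hb_sym : ∀ n : ℤ, 1 ≤ n → n ≤ p → (b n)ᵀ = b n)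
    (ha_inv : ∀ n : ℤ, 1 ≤ n → n ≤ p → IsUnit (a n).det)
    (d : ℝ)
    (hd : d = (∏ n ∈ Finset.Icc (1 : ℤ) (p : ℤ), ((a n).det) ^ 2) ^
      ((1 : ℝ) / ((p : ℝ) * (m : ℝ)))) :
    2 * (p : ℝ) * (m : ℝ) * d ≤
      ∑ n ∈ Finset.Icc (1 : ℤ) (p : ℤ), Matrix.trace (b n * b n + 2 • (a n * (a n)ᵀ)) ∧
    ((∑ n ∈ Finset.Icc (1 : ℤ) (p : ℤ), Matrix.trace (b n * b n + 2 • (a n * (a n)ᵀ)) =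
        2 * (p : ℝ) * (m : ℝ) * d) ↔
      (∀ n : ℤ, 1 ≤ n → n ≤ p →
        b n = 0 ∧ a n * (a n)ᵀ = d • (1 : Matrix (Fin m) (Fin m) ℝ))) := by
  classical
  set S : Finset ℤ := Finset.Icc (1 : ℤ) (p : ℤ) with hS
  have hcardS : S.card = p := by rw [hS, Int.card_Icc]; omega
  set P : ℝ := ∏ n ∈ S, ((a n).det) ^ 2 with hP
  have hdet_ne : ∀ n ∈ S, (a n).det ≠ 0 := by
    intro n hn
    rw [hS, Finset.mem_Icc] at hn
    exact (ha_inv n hn.1 hn.2).ne_zero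
  have hPpos : 0 < P :=
    Finset.prod_pos fun n hn =>
      lt_of_le_of_ne (sq_nonneg _) (Ne.symm (pow_ne_zero 2 (hdet_ne n hn)))
  have hdpos : 0 < d := by rw [hd]; exact Real.rpow_pos_of_pos hPpos _
  -- eigenvalue setup
  have hH : ∀ n : ℤ, (a n * (a n)ᵀ).IsHermitian := fun n => herm_aux (a n)
  set ev : ℤ → Fin m → ℝ := fun n i => (hH n).eigenvalues i with hev
  have hdetM : ∀ n : ℤ, ∏ i, ev n i = ((a n).det) ^ 2 := by
    intro n
    have := (hH n).det_eq_prod_eigenvalues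
    rw [det_mul, det_transpose, ← sq] at this
    exact this.symm
  have hevnonneg : ∀ n : ℤ, ∀ i, 0 ≤ ev n i := by
    intro n i
    have hps : (a n * (a n)ᵀ).PosSemidef := by
      have := posSemidef_self_mul_conjTranspose (a n)
      rwa [conjTranspose_eq_transpose_of_trivial] at this
    exact hps.eigenvalues_nonneg i
  have hevpos : ∀ n ∈ S, ∀ i, 0 < ev n i := by
    intro n hn i
    refine lt_of_le_of_ne (hevnonneg n i) (Ne.symm ?_)
    intro h0
    have : ∏ i, ev n i ≠ 0 := by
      rw [hdetM n]; exact pow_ne_zero 2 (hdet_ne n hn)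
    exact this (Finset.prod_eq_zero (Finset.mem_univ i) h0)
  -- product index set
  set s : Finset (ℤ × Fin m) := S ×ˢ (Finset.univ : Finset (Fin m)) with hs
  have hcards : s.card = p * m := by
    rw [hs, Finset.card_product, hcardS, Finset.card_univ, Fintype.card_fin]
  set x : ℤ × Fin m → ℝ := fun q => ev q.1 q.2 with hx
  have hxpos : ∀ q ∈ s, 0 < x q := by
    intro q hq
    rw [hs, Finset.mem_product] at hq
    exact hevpos q.1 hq.1 q.2
  have hNne : (p * m : ℕ) ≠ 0 := by positivity
  have hprod : ∏ q ∈ s, x q = d ^ s.card := by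
    rw [hcards, hs, Finset.prod_product]
    have h1 : ∏ n ∈ S, ∏ i, ev n i = P := by
      rw [hP]; exact Finset.prod_congr rfl fun n _ => hdetM n
    rw [h1, hd]
    rw [← Real.rpow_natCast (P ^ ((1:ℝ)/((p:ℝ)*(m:ℝ)))) (p*m), ← Real.rpow_mul hPpos.le]
    rw [Nat.cast_mul, one_div, inv_mul_cancel₀ (by positivity), Real.rpow_one]
  obtain ⟨hamgm_le, hamgm_iff⟩ := amgm_eq_aux s x d hdpos hxpos hprod
  rw [hcards] at hamgm_le hamgm_iff
  push_cast at hamgm_le hamgm_iff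
  -- trace decomposition
  have htraceM : ∀ n : ℤ, trace (a n * (a n)ᵀ) = ∑ i, ev n i := fun n =>
    trace_eq_sum_eig (hH n)
  have hdecomp : ∑ n ∈ S, trace (b n * b n + 2 • (a n * (a n)ᵀ)) =
      (∑ n ∈ S, trace (b n * b n)) + 2 * ∑ q ∈ s, x q := by
    rw [hs, Finset.sum_product]
    have : ∀ n : ℤ, trace (b n * b n + 2 • (a n * (a n)ᵀ)) =
        trace (b n * b n) + 2 * ∑ i, ev n i := by
      intro n
      rw [trace_add, two_smul, trace_add, htraceM n]
      ring
    rw [Finset.sum_congr rfl fun n _ => this n, Finset.sum_add_distrib, ← Finset.mul_sum]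
  have hTBnonneg : ∀ n ∈ S, 0 ≤ trace (b n * b n) := by
    intro n hn
    rw [hS, Finset.mem_Icc] at hn
    exact (trace_sq_aux (b n) (hb_sym n hn.1 hn.2)).1
  have hTB : 0 ≤ ∑ n ∈ S, trace (b n * b n) := Finset.sum_nonneg hTBnonneg
  constructor
  · rw [hdecomp]; nlinarith
  constructor
  · -- equality → pointwise
    intro heq
    rw [hdecomp] at heq
    have hTB0 : ∑ n ∈ S, trace (b n * b n) = 0 := by nlinarith
    have hX : ∑ q ∈ s, x q = (p : ℝ) * (m : ℝ) * d := by nlinarith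
    intro n h1 h2
    have hnS : n ∈ S := by rw [hS, Finset.mem_Icc]; exact ⟨h1, h2⟩
    constructor
    · have := (Finset.sum_eq_zero_iff_of_nonneg hTBnonneg).mp hTB0 n hnS
      exact (trace_sq_aux (b n) (hb_sym n h1 h2)).2.mp this
    · have hall := hamgm_iff.mp hX
      refine eq_smul_one_aux (hH n) fun i => ?_
      exact hall (n, i) (by rw [hs, Finset.mem_product]; exact ⟨hnS, Finset.mem_univ i⟩)
  · -- pointwise → equality
    intro h
    have hterm : ∀ n ∈ S, trace (b n * b n + 2 • (a n * (a n)ᵀ)) = 2 * (m : ℝ) * d := by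
      intro n hn
      rw [hS, Finset.mem_Icc] at hn
      obtain ⟨hb0, hM⟩ := h n hn.1 hn.2
      rw [hb0, hM, mul_zero, zero_add, two_smul, trace_add, trace_smul, trace_one]
      simp only [smul_eq_mul, Fintype.card_fin]
      ring
    rw [Finset.sum_congr rfl hterm, Finset.sum_const, hcardS, nsmul_eq_mul]
    ring
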